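/- Let d ≥ 1, let G, D > 0, let x_t, x, g ∈ ℝ^d satisfy ‖g‖ ≤ G and ‖x − x_t‖ ≤ D, and let 0 < η ≤ 1/(5DG). Set v = η g + 2η²⟨g, x − x_t⟩ g (the gradient of ℓ_t^η at x). Then for every w ∈ ℝ^d, ⟨v, w⟩² ≤ 2η²⟨g, w⟩²; equivalently, the matrix 2η² g gᵀ − v vᵀ is positive semidefinite, so the Hessian of ℓ_t^η dominates ∇ℓ_t^η(x)(∇ℓ_t^η(x))ᵀ and ℓ_t^η is 1-exp-concave. -/

import Mathlib

theorem expConcave_gradient_psd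
    (d : ℕ) (hd : 1 ≤ d) (G D : ℝ) (hG : 0 < G) (hD : 0 < D)
    (xt x g : EuclideanSpace ℝ (Fin d)) (hg : ‖g‖ ≤ G) (hxtx : ‖x - xt‖ ≤ D)
    (η : ℝ) (hη0 : 0 < η) (hη : η ≤ 1 / (5 * D * G))
    (v : EuclideanSpace ℝ (Fin d))
    (hv : v = η • g + (2 * η^2 * (inner ℝ g (x - xt) : ℝ)) • g) :
    ∀ w : EuclideanSpace ℝ (Fin d),
      (inner ℝ v w : ℝ)^2 ≤ 2 * η^2 * (inner ℝ g w : ℝ)^2 := by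
  intro w
  set c : ℝ := inner ℝ g (x - xt) with hc
  have hvw : (inner ℝ v w : ℝ) = (η + 2 * η^2 * c) * (inner ℝ g w : ℝ) := by
    rw [hv]
    simp [inner_add_left, inner_smul_left, add_mul]
  have hcs : |c| ≤ G * D := by
    calc |c| ≤ ‖g‖ * ‖x - xt‖ := abs_real_inner_le_norm g (x - xt)
    _ ≤ G * D := by
        apply mul_le_mul hg hxtx (norm_nonneg _) hG.le
  have hηc : η * |c| ≤ 1/5 := by
    have h5 : 0 < 5 * D * G := by positivity
    have : η * (5 * D * G) ≤ 1 := by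
      have := (le_div_iff₀ h5).mp hη
      linarith
    nlinarith [mul_le_mul_of_nonneg_left hcs hη0.le]
  have habs : |η * c| ≤ 1/5 := by rwa [abs_mul, abs_of_pos hη0]
  rw [hvw, mul_pow]
  have hkey : (η + 2 * η^2 * c)^2 ≤ 2 * η^2 := by
    have h1 : -(1/5 : ℝ) ≤ η * c := neg_le_of_abs_le habs
    have h2 : η * c ≤ 1/5 := le_of_abs_le habs
    have hsq : (1 + 2*(η*c))^2 ≤ 2 := by nlinarith
    have heq : (η + 2 * η^2 * c)^2 = η^2 * (1 + 2*(η*c))^2 := by ring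
    rw [heq]
    nlinarith [sq_nonneg η]
  nlinarith [sq_nonneg ((inner ℝ g w : ℝ)), mul_le_mul_of_nonneg_right hkey (sq_nonneg (inner ℝ g w : ℝ))]
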